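/- Let P be a smooth hypergraph property with d(P) = r ≥ 1. If H is a (χ^ℓ, P)-critical hypergraph with χ^ℓ(H : P) = k, then the minimum degree of H is at least r(k-1). -/

import Mathlib

/-- A finite hypergraph: finite vertex set, finite edge (name) set, and an
incidence function assigning to each edge its set of endpoints (at least 2).
Edge names outside `edges` are normalized to have empty incidence. -/
structure FinHypergraph where
  verts : Finset ℕ
  edges : Finset ℕ
  inc : ℕ → Finset ℕ
  inc_sub : ∀ e ∈ edges, inc e ⊆ verts
  two_le_inc : ∀ e ∈ edges, 2 ≤ (inc e).card
  inc_empty : ∀ e ∉ edges, inc e = ∅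

namespace FinHypergraph

theorem inc_subset (H : FinHypergraph) (e : ℕ) : H.inc e ⊆ H.verts := by
  by_cases h : e ∈ H.edges
  · exact H.inc_sub e h
  · rw [H.inc_empty e h]; exact Finset.empty_subset _

/-- Degree of a vertex: number of incident edges. -/
def degree (H : FinHypergraph) (v : ℕ) : ℕ :=
  (H.edges.filter (fun e => v ∈ H.inc e)).card

/-- The set of edges incident with `v`. -/
def edgesAt (H : FinHypergraph) (v : ℕ) : Finset ℕ :=
  H.edges.filter (fun e => v ∈ H.inc e)

/-- Degree sum `d(H)`. -/
def degSum (H : FinHypergraph) : ℕ := ∑ v ∈ H.verts, H.degree v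

/-- Maximum degree `Δ(H)` (0 for the empty hypergraph). -/
def maxDegree (H : FinHypergraph) : ℕ := H.verts.sup H.degree

/-- Minimum degree `δ(H)` (0 for the empty hypergraph). -/
def minDegree (H : FinHypergraph) : ℕ :=
  if h : H.verts.Nonempty then H.verts.inf' h H.degree else 0

/-- Induced subhypergraph `H[X]`. -/
def induce (H : FinHypergraph) (X : Finset ℕ) : FinHypergraph where
  verts := X ∩ H.verts
  edges := H.edges.filter (fun e => H.inc e ⊆ X ∩ H.verts)
  inc := fun e =>
    if e ∈ H.edges.filter (fun e => H.inc e ⊆ X ∩ H.verts) then H.inc e else ∅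
  inc_sub := by
    intro e he
    simp only [if_pos he]
    exact (Finset.mem_filter.mp he).2
  two_le_inc := by
    intro e he
    simp only [if_pos he]
    exact H.two_le_inc e (Finset.mem_filter.mp he).1
  inc_empty := by
    intro e he
    simp only [if_neg he]

/-- The hypergraph `H(X)` obtained by shrinking `H` to `X`. -/
def shrink (H : FinHypergraph) (X : Finset ℕ) : FinHypergraph where
  verts := X ∩ H.verts
  edges := H.edges.filter (fun e => 2 ≤ (H.inc e ∩ (X ∩ H.verts)).card)
  inc := fun e =>
    if e ∈ H.edges.filter (fun e => 2 ≤ (H.inc e ∩ (X ∩ H.verts)).card) then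
      H.inc e ∩ (X ∩ H.verts) else ∅
  inc_sub := by
    intro e he
    simp only [if_pos he]
    exact Finset.inter_subset_right
  two_le_inc := by
    intro e he
    simp only [if_pos he]
    exact (Finset.mem_filter.mp he).2
  inc_empty := by
    intro e he
    simp only [if_neg he]

/-- `H - v`. -/
def deleteVert (H : FinHypergraph) (v : ℕ) : FinHypergraph := H.induce (H.verts.erase v)

/-- The empty hypergraph `K_0`. -/
def emptyHG : FinHypergraph :=
  ⟨∅, ∅, fun _ => ∅, fun e he => absurd he (Finset.notMem_empty e),
    fun e he => absurd he (Finset.notMem_empty e), fun _ _ => rfl⟩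

/-- The one-vertex edgeless hypergraph `K_1` on vertex `v`. -/
def singleHG (v : ℕ) : FinHypergraph :=
  ⟨{v}, ∅, fun _ => ∅, fun e he => absurd he (Finset.notMem_empty e),
    fun e he => absurd he (Finset.notMem_empty e), fun _ _ => rfl⟩

/-- FinHypergraph isomorphism. -/
def Iso (H₁ H₂ : FinHypergraph) : Prop :=
  ∃ φ ψ : ℕ → ℕ, Set.BijOn φ ↑H₁.verts ↑H₂.verts ∧ Set.BijOn ψ ↑H₁.edges ↑H₂.edges ∧
    ∀ e ∈ H₁.edges, H₂.inc (ψ e) = (H₁.inc e).image φ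

/-- A class of hypergraphs closed under isomorphism. -/
def IsoClosed (P : Set FinHypergraph) : Prop :=
  ∀ H₁ H₂ : FinHypergraph, Iso H₁ H₂ → H₁ ∈ P → H₂ ∈ P

/-- Hereditary: closed under induced subhypergraphs. -/
def Hereditary (P : Set FinHypergraph) : Prop :=
  ∀ H ∈ P, ∀ X : Finset ℕ, H.induce X ∈ P

/-- A smooth hypergraph property: isomorphism-closed, hereditary and non-trivial. -/
def Smooth (P : Set FinHypergraph) : Prop :=
  IsoClosed P ∧ Hereditary P ∧ (∃ H ∈ P, H.verts.Nonempty) ∧ (∃ H : FinHypergraph, H ∉ P)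

/-- `F(P)`: hypergraphs not in `P` all of whose vertex-deleted subhypergraphs are in `P`. -/
def critFam (P : Set FinHypergraph) : Set FinHypergraph :=
  {H : FinHypergraph | H ∉ P ∧ ∀ v ∈ H.verts, H.deleteVert v ∈ P}

/-- `d(P) = min {δ(G) : G ∈ F(P)}`. -/
noncomputable def dP (P : Set FinHypergraph) : ℕ := sInf (minDegree '' critFam P)

/-- Disjoint union of two hypergraphs. -/
def disjUnion (H₁ H₂ : FinHypergraph) : FinHypergraph where
  verts := H₁.verts ∪ H₂.verts
  edges := H₁.edges ∪ H₂.edges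
  inc := fun e => H₁.inc e ∪ H₂.inc e
  inc_sub := fun e _ => Finset.union_subset_union (H₁.inc_subset e) (H₂.inc_subset e)
  two_le_inc := by
    intro e he
    rcases Finset.mem_union.mp he with h | h
    · exact le_trans (H₁.two_le_inc e h) (Finset.card_le_card Finset.subset_union_left)
    · exact le_trans (H₂.two_le_inc e h) (Finset.card_le_card Finset.subset_union_right)
  inc_empty := by
    intro e he
    rw [Finset.mem_union] at he
    push_neg at he
    simp only [H₁.inc_empty e he.1, H₂.inc_empty e he.2, Finset.empty_union]

/-- Additive: closed under vertex-disjoint unions. -/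
def Additive (P : Set FinHypergraph) : Prop :=
  ∀ H₁ H₂ : FinHypergraph, H₁ ∈ P → H₂ ∈ P → Disjoint H₁.verts H₂.verts →
    Disjoint H₁.edges H₂.edges → disjUnion H₁ H₂ ∈ P

/-- A `(P,L)`-coloring exists: an `L`-coloring each of whose color classes induces
a hypergraph in `P`. -/
def ColorableWith (P : Set FinHypergraph) (H : FinHypergraph) (L : ℕ → Finset ℕ) : Prop :=
  ∃ φ : ℕ → ℕ, (∀ v ∈ H.verts, φ v ∈ L v) ∧
    ∀ c : ℕ, H.induce (H.verts.filter (fun v => φ v = c)) ∈ P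

/-- `H` is `(P,L)`-critical. -/
def Critical (P : Set FinHypergraph) (H : FinHypergraph) (L : ℕ → Finset ℕ) : Prop :=
  ¬ ColorableWith P H L ∧ ∀ v ∈ H.verts, ColorableWith P (H.deleteVert v) L

/-- The `P`-list-chromatic number `χ^ℓ(H : P)`. -/
noncomputable def listChrom (P : Set FinHypergraph) (H : FinHypergraph) : ℕ :=
  sInf {k : ℕ | ∀ L : ℕ → Finset ℕ, (∀ v ∈ H.verts, k ≤ (L v).card) → ColorableWith P H L}

/-- The `P`-chromatic number `χ(H : P)`. -/
noncomputable def chrom (P : Set FinHypergraph) (H : FinHypergraph) : ℕ :=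
  sInf {k : ℕ | ∃ φ : ℕ → ℕ, (∀ v ∈ H.verts, φ v ∈ Finset.range k) ∧
    ∀ c : ℕ, H.induce (H.verts.filter (fun v => φ v = c)) ∈ P}

/-- `(χ^ℓ, P)`-critical: every proper induced subhypergraph has strictly smaller
`P`-list-chromatic number. -/
def ListCritical (P : Set FinHypergraph) (H : FinHypergraph) : Prop :=
  ∀ X : Finset ℕ, X ⊂ H.verts → listChrom P (H.induce X) < listChrom P H

/-- Two vertices lie in a common edge. -/
def Adj (H : FinHypergraph) (u v : ℕ) : Prop := ∃ e ∈ H.edges, u ∈ H.inc e ∧ v ∈ H.inc e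

/-- Connectedness via hyperpaths. -/
def Connected (H : FinHypergraph) : Prop :=
  H.verts.Nonempty ∧ ∀ u ∈ H.verts, ∀ v ∈ H.verts, Relation.ReflTransGen H.Adj u v

/-- `v` is a separating vertex of `H`. -/
def IsSepVert (H : FinHypergraph) (v : ℕ) : Prop :=
  ∃ X Y : Finset ℕ, X ∪ Y = H.verts ∧ X ∩ Y = {v} ∧ 2 ≤ X.card ∧ 2 ≤ Y.card ∧
    ∀ e ∈ H.edges, H.inc e ⊆ X ∨ H.inc e ⊆ Y

/-- `B` is a block of `H`: a maximal connected induced subhypergraph without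
separating vertices. -/
def IsBlock (H B : FinHypergraph) : Prop :=
  ∃ X ⊆ H.verts, B = H.induce X ∧ B.Connected ∧ (∀ v : ℕ, ¬ B.IsSepVert v) ∧
    ∀ Y : Finset ℕ, X ⊂ Y → Y ⊆ H.verts →
      ¬ ((H.induce Y).Connected ∧ ∀ v : ℕ, ¬ (H.induce Y).IsSepVert v)

/-- Multiplicity of the pair `u, v`. -/
def mult (H : FinHypergraph) (u v : ℕ) : ℕ :=
  (H.edges.filter (fun e => H.inc e = {u, v})).card

/-- `H = tK_n`: the complete graph on `n` vertices with each edge of multiplicity `t`. -/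
def IsTK (H : FinHypergraph) (t n : ℕ) : Prop :=
  H.verts.card = n ∧
    (∀ e ∈ H.edges, ∃ u ∈ H.verts, ∃ v ∈ H.verts, u ≠ v ∧ H.inc e = {u, v}) ∧
    ∀ u ∈ H.verts, ∀ v ∈ H.verts, u ≠ v → H.mult u v = t

/-- `H = tC_n`: the cycle on `n` vertices (ordinary edges) with each edge of
multiplicity `t`. -/
def IsTC (H : FinHypergraph) (t n : ℕ) : Prop :=
  3 ≤ n ∧ ∃ f : ℕ → ℕ, Set.InjOn f (Set.Iio n) ∧
    H.verts = (Finset.range n).image f ∧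
    (∀ e ∈ H.edges, ∃ i < n, H.inc e = {f i, f ((i + 1) % n)}) ∧
    ∀ i < n, (H.edges.filter (fun e => H.inc e = {f i, f ((i + 1) % n)})).card = t

/-- A brick: `tC_n` with `n ≥ 3` odd, or `tK_n`. -/
def IsBrick (H : FinHypergraph) : Prop :=
  (∃ t ≥ 1, ∃ n : ℕ, 3 ≤ n ∧ Odd n ∧ IsTC H t n) ∨ (∃ t ≥ 1, ∃ n ≥ 1, IsTK H t n)

/-- `r`-regular. -/
def IsRegular (H : FinHypergraph) (r : ℕ) : Prop := ∀ v ∈ H.verts, H.degree v = r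

/-- Simple: no parallel edges. -/
def Simple (H : FinHypergraph) : Prop :=
  ∀ e ∈ H.edges, ∀ e' ∈ H.edges, e ≠ e' → H.inc e ≠ H.inc e'

/-- The set `V(H, P, L)` of low vertices (for `d(P) = r`). -/
def lowVerts (H : FinHypergraph) (L : ℕ → Finset ℕ) (r : ℕ) : Finset ℕ :=
  H.verts.filter (fun v => H.degree v = r * (L v).card)

end FinHypergraph

open FinHypergraph

namespace FinHypergraph

lemma ext' {H₁ H₂ : FinHypergraph} (hv : H₁.verts = H₂.verts) (he : H₁.edges = H₂.edges)
    (hi : H₁.inc = H₂.inc) : H₁ = H₂ := by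
  cases H₁; cases H₂; simp_all

lemma eq_emptyHG (G : FinHypergraph) (h : G.verts = ∅) : G = emptyHG := by
  have he : G.edges = ∅ := by
    rw [Finset.eq_empty_iff_forall_notMem]
    intro e hee
    have h2 := G.two_le_inc e hee
    have := G.inc_sub e hee
    rw [h, Finset.subset_empty] at this
    simp [this] at h2
  refine ext' (by simp [h, emptyHG]) (by simp [he, emptyHG]) ?_
  funext e
  have : e ∉ G.edges := by simp [he]
  simp [G.inc_empty e this, emptyHG]

lemma eq_singleHG (G : FinHypergraph) (v : ℕ) (h : G.verts = {v}) : G = singleHG v := by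
  have he : G.edges = ∅ := by
    rw [Finset.eq_empty_iff_forall_notMem]
    intro e hee
    have h2 := G.two_le_inc e hee
    have hsub := G.inc_sub e hee
    rw [h] at hsub
    have := Finset.card_le_card hsub
    simp at this
    omega
  refine ext' (by simp [h, singleHG]) (by simp [he, singleHG]) ?_
  funext e
  have : e ∉ G.edges := by simp [he]
  simp [G.inc_empty e this, singleHG]

lemma induce_congr (H : FinHypergraph) {X Y : Finset ℕ} (h : X ∩ H.verts = Y ∩ H.verts) :
    H.induce X = H.induce Y := by
  refine ext' ?_ ?_ ?_ <;> simp only [induce, h]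

lemma mem_induce_edges (H : FinHypergraph) (X : Finset ℕ) (e : ℕ) :
    e ∈ (H.induce X).edges ↔ e ∈ H.edges ∧ H.inc e ⊆ X ∩ H.verts := by
  simp [induce]

lemma induce_inc_of_mem (H : FinHypergraph) (X : Finset ℕ) (e : ℕ)
    (he : e ∈ (H.induce X).edges) : (H.induce X).inc e = H.inc e := by
  simp only [induce] at he ⊢
  rw [if_pos he]

lemma induce_verts (H : FinHypergraph) (X : Finset ℕ) : (H.induce X).verts = X ∩ H.verts := rfl

lemma induce_induce (H : FinHypergraph) (X Y : Finset ℕ) :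
    (H.induce X).induce Y = H.induce (Y ∩ (X ∩ H.verts)) := by
  have hverts : (Y ∩ (X ∩ H.verts)) ∩ H.verts = Y ∩ (X ∩ H.verts) := by
    rw [Finset.inter_eq_left]
    exact le_trans Finset.inter_subset_right Finset.inter_subset_right
  have hedges : ((H.induce X).induce Y).edges = (H.induce (Y ∩ (X ∩ H.verts))).edges := by
    ext e
    rw [mem_induce_edges, mem_induce_edges, mem_induce_edges, hverts, induce_verts]
    constructor
    · rintro ⟨⟨he, h1⟩, h2⟩
      rw [induce_inc_of_mem H X e (by rw [mem_induce_edges]; exact ⟨he, h1⟩)] at h2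
      exact ⟨he, h2⟩
    · rintro ⟨he, h2⟩
      have h1 : H.inc e ⊆ X ∩ H.verts := le_trans h2 Finset.inter_subset_right
      refine ⟨⟨he, h1⟩, ?_⟩
      rwa [induce_inc_of_mem H X e (by rw [mem_induce_edges]; exact ⟨he, h1⟩)]
  refine ext' ?_ hedges ?_
  · show Y ∩ (X ∩ H.verts) = (Y ∩ (X ∩ H.verts)) ∩ H.verts
    rw [hverts]
  · funext e
    by_cases he : e ∈ ((H.induce X).induce Y).edges
    · rw [induce_inc_of_mem _ _ _ he]
      have he' : e ∈ (H.induce (Y ∩ (X ∩ H.verts))).edges := by rwa [← hedges]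
      rw [induce_inc_of_mem _ _ _ he', induce_inc_of_mem H X e]
      · rw [mem_induce_edges] at he'
        rw [mem_induce_edges]
        exact ⟨he'.1, le_trans he'.2 (by rw [hverts] at *; exact Finset.inter_subset_right)⟩
    · rw [((H.induce X).induce Y).inc_empty e he,
        (H.induce (Y ∩ (X ∩ H.verts))).inc_empty e (by rwa [← hedges])]

end FinHypergraph
namespace FinHypergraph

lemma emptyHG_mem {P : Set FinHypergraph} (hP : Smooth P) : emptyHG ∈ P := by
  obtain ⟨_, hHer, ⟨H0, hH0, _⟩, _⟩ := hP
  have := hHer H0 hH0 ∅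
  rwa [eq_emptyHG (H0.induce ∅) (by simp [induce_verts])] at this

lemma singleHG_mem {P : Set FinHypergraph} (hP : Smooth P) (v : ℕ) : singleHG v ∈ P := by
  obtain ⟨hIso, hHer, ⟨H0, hH0, ⟨w, hw⟩⟩, _⟩ := hP
  have h1 := hHer H0 hH0 {w}
  have h2 : H0.induce {w} = singleHG w := by
    apply eq_singleHG
    rw [induce_verts]
    exact Finset.inter_eq_left.mpr (Finset.singleton_subset_iff.mpr hw)
  rw [h2] at h1
  refine hIso (singleHG w) (singleHG v) ?_ h1
  refine ⟨fun _ => v, id, ?_, ?_, ?_⟩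
  · constructor
    · intro x _; simp [singleHG]
    constructor
    · intro x hx y hy _; simp [singleHG] at hx hy; simp [hx, hy]
    · intro x hx; simp [singleHG] at hx; exact ⟨w, by simp [singleHG, hx]⟩
  · simp [singleHG, Set.bijOn_empty]
  · intro e he; simp [singleHG] at he

lemma induce_mem_of_subsingleton {P : Set FinHypergraph} (hP : Smooth P) (G : FinHypergraph)
    (X : Finset ℕ) (h : (X ∩ G.verts).card ≤ 1) : G.induce X ∈ P := by
  interval_cases h' : (X ∩ G.verts).card
  · rw [Finset.card_eq_zero] at h'
    rw [eq_emptyHG (G.induce X) (by rw [induce_verts]; exact h')]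
    exact emptyHG_mem hP
  · rw [Finset.card_eq_one] at h'
    obtain ⟨w, hw⟩ := h'
    rw [eq_singleHG (G.induce X) w (by rw [induce_verts]; exact hw)]
    exact singleHG_mem hP w

lemma exists_injOn_choice (L : ℕ → Finset ℕ) (s : Finset ℕ)
    (hs : ∀ v ∈ s, s.card ≤ (L v).card) :
    ∃ φ : ℕ → ℕ, Set.InjOn φ ↑s ∧ ∀ v ∈ s, φ v ∈ L v := by
  classical
  induction s using Finset.induction_on with
  | empty => exact ⟨fun _ => 0, by simp, by simp⟩
  | @insert a s ha ih =>
    obtain ⟨φ, hinj, hmem⟩ := ih (fun v hv => le_trans (Finset.card_le_card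
      (Finset.subset_insert a s)) (hs v (Finset.mem_insert_of_mem hv)))
    have hcard : (s.image φ).card < (L a).card := by
      calc (s.image φ).card ≤ s.card := Finset.card_image_le
        _ < (insert a s).card := by rw [Finset.card_insert_of_notMem ha]; omega
        _ ≤ (L a).card := hs a (Finset.mem_insert_self a s)
    obtain ⟨c, hc⟩ : ((L a) \ (s.image φ)).Nonempty := by
      rw [← Finset.card_pos]
      have := Finset.le_card_sdiff (s.image φ) (L a)
      omega
    rw [Finset.mem_sdiff] at hc
    refine ⟨Function.update φ a c, ?_, ?_⟩
    · intro x hx y hy hxy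
      simp only [Finset.coe_insert, Set.mem_insert_iff] at hx hy
      rcases hx with rfl | hx <;> rcases hy with rfl | hy
      · rfl
      · rw [Function.update_self, Function.update_of_ne (by rintro rfl; exact ha hy)] at hxy
        exact absurd (Finset.mem_image_of_mem φ hy) (hxy ▸ hc.2)
      · rw [Function.update_self, Function.update_of_ne (by rintro rfl; exact ha hx)] at hxy
        exact absurd (Finset.mem_image_of_mem φ hx) (hxy.symm ▸ hc.2)
      · rw [Function.update_of_ne (by rintro rfl; exact ha hx),
          Function.update_of_ne (by rintro rfl; exact ha hy)] at hxy
        exact hinj hx hy hxy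
    · intro u hu
      rcases Finset.mem_insert.mp hu with rfl | hu'
      · rw [Function.update_self]; exact hc.1
      · rw [Function.update_of_ne (by rintro rfl; exact ha hu')]; exact hmem u hu'

def colorSet (P : Set FinHypergraph) (G : FinHypergraph) : Set ℕ :=
  {k : ℕ | ∀ L : ℕ → Finset ℕ, (∀ v ∈ G.verts, k ≤ (L v).card) → ColorableWith P G L}

lemma listChrom_eq (P : Set FinHypergraph) (G : FinHypergraph) :
    listChrom P G = sInf (colorSet P G) := rfl

lemma card_mem_colorSet {P : Set FinHypergraph} (hP : Smooth P) (G : FinHypergraph) :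
    G.verts.card ∈ colorSet P G := by
  intro L hL
  obtain ⟨φ, hinj, hmem⟩ := exists_injOn_choice L G.verts hL
  refine ⟨φ, hmem, ?_⟩
  intro c
  apply induce_mem_of_subsingleton hP
  rw [Finset.inter_eq_left.mpr (Finset.filter_subset _ _)]
  rw [Finset.card_le_one]
  intro a ha b hb
  rw [Finset.mem_filter] at ha hb
  exact hinj ha.1 hb.1 (ha.2.trans hb.2.symm)

lemma colorable_of_listChrom_le {P : Set FinHypergraph} (hP : Smooth P) (G : FinHypergraph)
    {m : ℕ} (h : listChrom P G ≤ m) (L : ℕ → Finset ℕ)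
    (hL : ∀ v ∈ G.verts, m ≤ (L v).card) : ColorableWith P G L := by
  have hne : (colorSet P G).Nonempty := ⟨G.verts.card, card_mem_colorSet hP G⟩
  have hmem := Nat.sInf_mem hne
  rw [listChrom_eq] at h
  exact hmem L (fun v hv => le_trans (le_trans h (hL v hv)) (le_refl _))

end FinHypergraph
open FinHypergraph

/-- a `(χ^ℓ,P)`-critical hypergraph with `χ^ℓ(H:P) = k` has
minimum degree at least `r(k-1)`. -/
theorem stmt9 (P : Set FinHypergraph) (hP : Smooth P) (r : ℕ) (hr : dP P = r)
    (hr1 : 1 ≤ r) (H : FinHypergraph) (hcrit : ListCritical P H)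
    (k : ℕ) (hk : listChrom P H = k) :
    r * (k - 1) ≤ H.minDegree := by
  classical
  rcases Nat.eq_zero_or_pos k with hk0 | hk1
  · simp [hk0]
  by_cases hvne : H.verts.Nonempty
  swap
  · exfalso
    rw [Finset.not_nonempty_iff_eq_empty] at hvne
    have h0 : (0 : ℕ) ∈ colorSet P H := by
      intro L _
      exact ⟨fun _ => 0, by simp [hvne], fun c => by
        apply induce_mem_of_subsingleton hP; simp [hvne]⟩
    have := Nat.sInf_le h0
    rw [← listChrom_eq, hk] at this
    omega
  rw [minDegree, dif_pos hvne, Finset.le_inf'_iff]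
  intro v hv
  -- a bad list assignment of size k-1
  have hknot : k - 1 ∉ colorSet P H := by
    apply Nat.notMem_of_lt_sInf
    rw [← listChrom_eq, hk]
    omega
  rw [colorSet, Set.mem_setOf_eq] at hknot
  push_neg at hknot
  obtain ⟨L, hLcard, hLnc⟩ := hknot
  have hch : ∀ u, u ∈ H.verts → ∃ T : Finset ℕ, T ⊆ L u ∧ T.card = k - 1 :=
    fun u hu => Finset.exists_subset_card_eq (hLcard u hu)
  set L' : ℕ → Finset ℕ := fun u => if h : u ∈ H.verts then (hch u h).choose else L u
    with hL'def
  have hL'sub : ∀ u ∈ H.verts, L' u ⊆ L u := by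
    intro u hu; rw [hL'def]; simp only [dif_pos hu]; exact (hch u hu).choose_spec.1
  have hL'card : ∀ u ∈ H.verts, (L' u).card = k - 1 := by
    intro u hu; rw [hL'def]; simp only [dif_pos hu]; exact (hch u hu).choose_spec.2
  have hL'nc : ¬ ColorableWith P H L' := by
    rintro ⟨φ, h1, h2⟩
    exact hLnc ⟨φ, fun u hu => hL'sub u hu (h1 u hu), h2⟩
  -- color H - v with L'
  set W := H.verts.erase v with hWdef
  have hWsub : W ⊆ H.verts := Finset.erase_subset v H.verts
  have herase : W ∩ H.verts = W := Finset.inter_eq_left.mpr hWsub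
  have hlt : listChrom P (H.induce W) ≤ k - 1 := by
    have := hcrit W (Finset.erase_ssubset hv)
    rw [hk] at this
    omega
  obtain ⟨φ, hφ1, hφ2⟩ := colorable_of_listChrom_le hP _ hlt L' (by
    intro u hu
    rw [induce_verts, herase] at hu
    rw [hL'card u (hWsub hu)])
  rw [induce_verts, herase] at hφ1
  -- the color classes of φ induce hypergraphs in P
  have hclass : ∀ c, H.induce (W.filter (fun u => φ u = c)) ∈ P := by
    intro c
    have h := hφ2 c
    rw [induce_verts, herase, induce_induce] at h
    have hseteq : (W.filter (fun u => φ u = c)) ∩ (W ∩ H.verts) = W.filter (fun u => φ u = c) :=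
      Finset.inter_eq_left.mpr (Finset.subset_inter (Finset.filter_subset _ _)
        (subset_trans (Finset.filter_subset _ _) hWsub))
    rwa [hseteq] at h
  -- each color of L' v gives a non-P induced hypergraph when v is added to its class
  have hbad : ∀ c ∈ L' v, H.induce (insert v (W.filter (fun u => φ u = c))) ∉ P := by
    intro c hc hcon
    apply hL'nc
    refine ⟨Function.update φ v c, ?_, ?_⟩
    · intro u hu
      by_cases huv : u = v
      · subst huv; rw [Function.update_self]; exact hc
      · rw [Function.update_of_ne huv]
        exact hφ1 u (Finset.mem_erase.mpr ⟨huv, hu⟩)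
    · intro c'
      by_cases hcc : c' = c
      · subst hcc
        have hset : H.verts.filter (fun u => Function.update φ v c' u = c') =
            insert v (W.filter (fun u => φ u = c')) := by
          ext u
          simp only [Finset.mem_filter, Finset.mem_insert, hWdef, Finset.mem_erase]
          constructor
          · rintro ⟨hu, hcu⟩
            by_cases huv : u = v
            · exact Or.inl huv
            · rw [Function.update_of_ne huv] at hcu
              exact Or.inr ⟨⟨huv, hu⟩, hcu⟩
          · rintro (huv | ⟨⟨huv, hu⟩, hcu⟩)
            · rw [huv]; exact ⟨hv, Function.update_self v c' φ⟩
            · exact ⟨hu, by rw [Function.update_of_ne huv]; exact hcu⟩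
        rw [hset]
        exact hcon
      · have hset : H.verts.filter (fun u => Function.update φ v c u = c') =
            W.filter (fun u => φ u = c') := by
          ext u
          simp only [Finset.mem_filter, hWdef, Finset.mem_erase]
          constructor
          · rintro ⟨hu, hcu⟩
            have huv : u ≠ v := by
              rintro rfl
              rw [Function.update_self] at hcu
              exact hcc hcu.symm
            rw [Function.update_of_ne huv] at hcu
            exact ⟨⟨huv, hu⟩, hcu⟩
          · rintro ⟨⟨huv, hu⟩, hcu⟩
            exact ⟨hu, by rw [Function.update_of_ne huv]; exact hcu⟩
        rw [hset]
        exact hclass c'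
  -- for each color, extract a minimal non-P induced subhypergraph and count edges at v
  have hkey : ∀ c ∈ L' v, ∃ Ec : Finset ℕ, r ≤ Ec.card ∧ ∀ e ∈ Ec,
      e ∈ H.edges ∧ v ∈ H.inc e ∧ H.inc e ⊆ insert v (W.filter (fun u => φ u = c)) := by
    intro c hc
    set S := W.filter (fun u => φ u = c) with hSdef
    have hSsub : S ⊆ H.verts := subset_trans (Finset.filter_subset _ _) hWsub
    set T := insert v S with hTdef
    have hTsub : T ⊆ H.verts := by
      rw [hTdef]; exact Finset.insert_subset hv hSsub
    set C := T.powerset.filter (fun X => H.induce X ∉ P) with hCdef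
    have hTC : T ∈ C := by
      rw [hCdef, Finset.mem_filter]
      exact ⟨Finset.mem_powerset_self T, hbad c hc⟩
    obtain ⟨X, hXC, hXmin⟩ := Finset.exists_min_image C Finset.card ⟨T, hTC⟩
    rw [hCdef, Finset.mem_filter, Finset.mem_powerset] at hXC
    obtain ⟨hXT, hXnp⟩ := hXC
    have hXverts : X ⊆ H.verts := subset_trans hXT hTsub
    have hvX : v ∈ X := by
      by_contra hvX
      have hXS : X ⊆ S := by
        intro u hu
        rcases Finset.mem_insert.mp (hXT hu) with rfl | h
        · exact absurd hu hvX
        · exact h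
      apply hXnp
      have hher := hP.2.1 (H.induce S) (hclass c) X
      rw [induce_induce] at hher
      have hseteq : (X ∩ (S ∩ H.verts)) ∩ H.verts = X ∩ H.verts := by
        ext u
        simp only [Finset.mem_inter]
        constructor
        · tauto
        · rintro ⟨h1, h2⟩
          exact ⟨⟨h1, hXS h1, h2⟩, h2⟩
      rwa [induce_congr H hseteq] at hher
    have hXv' : v ∈ (H.induce X).verts := Finset.mem_inter.mpr ⟨hvX, hv⟩
    have hcritmem : H.induce X ∈ critFam P := by
      refine ⟨hXnp, ?_⟩
      intro u hu
      rw [induce_verts] at hu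
      show (H.induce X).induce ((H.induce X).verts.erase u) ∈ P
      rw [induce_induce]
      set X' := ((H.induce X).verts.erase u) ∩ (X ∩ H.verts) with hX'def
      have hX'X : X' ⊆ X := le_trans Finset.inter_subset_right Finset.inter_subset_left
      have hX'u : u ∉ X' := by
        rw [hX'def]
        simp only [Finset.mem_inter, induce_verts, Finset.mem_erase]
        tauto
      by_contra hbad2
      have hX'C : X' ∈ C := by
        rw [hCdef, Finset.mem_filter, Finset.mem_powerset]
        exact ⟨le_trans hX'X hXT, hbad2⟩
      have hmin := hXmin X' hX'C
      have hX'sub : X' ⊆ X.erase u := fun w hw =>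
        Finset.mem_erase.mpr ⟨by rintro rfl; exact hX'u hw, hX'X hw⟩
      have hcard := Finset.card_le_card hX'sub
      have huX : u ∈ X := (Finset.mem_inter.mp hu).1
      rw [Finset.card_erase_of_mem huX] at hcard
      have hpos : 0 < X.card := Finset.card_pos.mpr ⟨u, huX⟩
      omega
    have hr2 : r ≤ (H.induce X).degree v := by
      have h1 : dP P ≤ (H.induce X).minDegree := Nat.sInf_le ⟨H.induce X, hcritmem, rfl⟩
      have h2 : (H.induce X).minDegree ≤ (H.induce X).degree v := by
        rw [minDegree, dif_pos ⟨v, hXv'⟩]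
        exact Finset.inf'_le _ hXv'
      omega
    refine ⟨(H.induce X).edges.filter (fun e => v ∈ (H.induce X).inc e), hr2, ?_⟩
    intro e he
    rw [Finset.mem_filter] at he
    obtain ⟨hee, hev⟩ := he
    rw [induce_inc_of_mem _ _ _ hee] at hev
    rw [mem_induce_edges] at hee
    exact ⟨hee.1, hev, le_trans hee.2 (le_trans Finset.inter_subset_left hXT)⟩
  -- counting
  set F : ℕ → Finset ℕ := fun c => if hc : c ∈ L' v then (hkey c hc).choose else ∅ with hFdef
  have hFcard : ∀ c ∈ L' v, r ≤ (F c).card := by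
    intro c hc
    rw [hFdef]
    simp only [dif_pos hc]
    exact (hkey c hc).choose_spec.1
  have hFprop : ∀ c ∈ L' v, ∀ e ∈ F c,
      e ∈ H.edges ∧ v ∈ H.inc e ∧ H.inc e ⊆ insert v (W.filter (fun u => φ u = c)) := by
    intro c hc
    rw [hFdef]
    simp only [dif_pos hc]
    exact (hkey c hc).choose_spec.2
  have hdisj : ∀ c ∈ L' v, ∀ c' ∈ L' v, c ≠ c' → Disjoint (F c) (F c') := by
    intro c hc c' hc' hne
    rw [Finset.disjoint_left]
    intro e he he'
    obtain ⟨hee, hev, hsub⟩ := hFprop c hc e he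
    obtain ⟨_, _, hsub'⟩ := hFprop c' hc' e he'
    have hone : H.inc e ⊆ {v} := by
      intro u hu
      rcases Finset.mem_insert.mp (hsub hu) with rfl | h
      · exact Finset.mem_singleton_self u
      · rcases Finset.mem_insert.mp (hsub' hu) with rfl | h'
        · exact Finset.mem_singleton_self u
        · rw [Finset.mem_filter] at h h'
          exact absurd (h.2.symm.trans h'.2) hne
    have := Finset.card_le_card hone
    have h2 := H.two_le_inc e hee
    simp at this
    omega
  have hbu : ((L' v).biUnion F).card = ∑ c ∈ L' v, (F c).card :=
    Finset.card_biUnion hdisj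
  have hsub2 : (L' v).biUnion F ⊆ H.edges.filter (fun e => v ∈ H.inc e) := by
    intro e he
    rw [Finset.mem_biUnion] at he
    obtain ⟨c, hc, he⟩ := he
    obtain ⟨hee, hev, _⟩ := hFprop c hc e he
    exact Finset.mem_filter.mpr ⟨hee, hev⟩
  calc r * (k - 1) = ∑ _c ∈ L' v, r := by
        rw [Finset.sum_const, smul_eq_mul, hL'card v hv, mul_comm]
    _ ≤ ∑ c ∈ L' v, (F c).card := Finset.sum_le_sum hFcard
    _ = ((L' v).biUnion F).card := hbu.symm
    _ ≤ (H.edges.filter (fun e => v ∈ H.inc e)).card := Finset.card_le_card hsub2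
    _ = H.degree v := rfl
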